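/- Let M₀, M₁ be symmetric operators on ℝⁿ ⊗ ℝᵐ ≅ ℝ^{nm} given by M₀ = B₁⊗I + I⊗B₂ and M₁ = A₁⊗I + I⊗A₂ with A₁, B₁ symmetric n×n and A₂, B₂ symmetric m×m, and M₀ negative definite. Define 𝔯(u⊗v) = ⟨u⊗v, M₁(u⊗v)⟩/⟨u⊗v, −M₀(u⊗v)⟩. Then for unit vectors u, v, 𝔯(u⊗v) = −(uᵀA₁u + vᵀA₂v)/(uᵀB₁u + vᵀB₂v), and the gradient ∇𝔯(u⊗v) lies in the tangent space T_{u⊗v}ℳ₁ = {x⊗v + u⊗y : x ∈ ℝⁿ, y ∈ ℝᵐ} of the rank-one manifold. -/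

import Mathlib

open Matrix Kronecker
open scoped RealInnerProductSpace

private lemma quad_hasGradientAt {ι : Type*} [Fintype ι] [DecidableEq ι]
    (M : Matrix ι ι ℝ) (hM : M.IsSymm) (X : EuclideanSpace ℝ ι) :
    HasGradientAt (fun Y : EuclideanSpace ℝ ι => (fun p => Y p) ⬝ᵥ M.mulVec (fun p => Y p))
      (show EuclideanSpace ℝ ι from WithLp.toLp 2 fun p => 2 * M.mulVec (fun q => X q) p) X := by
  rw [hasGradientAt_iff_hasFDerivAt]
  set T : EuclideanSpace ℝ ι →L[ℝ] EuclideanSpace ℝ ι :=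
    LinearMap.toContinuousLinearMap (Matrix.toEuclideanLin M) with hT
  have hTapp : ∀ (z : EuclideanSpace ℝ ι) (p : ι), T z p = M.mulVec (fun q => z q) p := by
    intro z p
    rfl
  have key : (fun Y : EuclideanSpace ℝ ι => (fun p => Y p) ⬝ᵥ M.mulVec (fun p => Y p))
      = fun Y => (inner ℝ Y (T Y) : ℝ) := by
    funext Y
    simp only [PiLp.inner_apply, RCLike.inner_apply, conj_trivial, dotProduct]
    exact Finset.sum_congr rfl fun p _ => by rw [hTapp, mul_comm]
  rw [key]
  have H := (hasFDerivAt_id X).inner ℝ (T.hasFDerivAt (x := X))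
  have hD : (InnerProductSpace.toDual ℝ (EuclideanSpace ℝ ι))
        (show EuclideanSpace ℝ ι from WithLp.toLp 2 fun p => 2 * M.mulVec (fun q => X q) p)
      = (fderivInnerCLM ℝ (X, T X)).comp
          ((ContinuousLinearMap.id ℝ (EuclideanSpace ℝ ι)).prod T) := by
    ext h
    simp only [InnerProductSpace.toDual_apply_apply, ContinuousLinearMap.comp_apply,
      ContinuousLinearMap.prod_apply, ContinuousLinearMap.id_apply, fderivInnerCLM_apply,
      PiLp.inner_apply, RCLike.inner_apply, conj_trivial, hTapp]
    have h1 : ∑ p, X p * M.mulVec (fun q => h q) p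
        = ∑ p, M.mulVec (fun q => X q) p * h p := by
      have h2 := Matrix.dotProduct_mulVec (fun p => X p) M (fun q => h q)
      rw [dotProduct, dotProduct] at h2
      rw [h2]
      refine Finset.sum_congr rfl fun p _ => ?_
      congr 1
      conv_lhs => rw [← hM]
      rw [Matrix.vecMul_transpose]
    rw [show ∑ p, M.mulVec (fun q => h q) p * X p = ∑ p, X p * M.mulVec (fun q => h q) p from
      Finset.sum_congr rfl fun p _ => mul_comm _ _, h1, ← Finset.sum_add_distrib]
    exact Finset.sum_congr rfl fun p _ => by ring
  rw [hD]
  exact H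

private lemma kron_mulVec {n m : ℕ} (A : Matrix (Fin n) (Fin n) ℝ) (B : Matrix (Fin m) (Fin m) ℝ)
    (u : Fin n → ℝ) (v : Fin m → ℝ) :
    (A ⊗ₖ B).mulVec (fun p : Fin n × Fin m => u p.1 * v p.2)
      = fun p => A.mulVec u p.1 * B.mulVec v p.2 := by
  funext p
  simp only [Matrix.mulVec, dotProduct, Matrix.kroneckerMap_apply, Fintype.sum_prod_type]
  rw [Finset.sum_mul_sum]
  exact Finset.sum_congr rfl fun i _ => Finset.sum_congr rfl fun j _ => by ring

private lemma dot_prod_vec {n m : ℕ} (a u : Fin n → ℝ) (b v : Fin m → ℝ) :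
    (fun p : Fin n × Fin m => u p.1 * v p.2) ⬝ᵥ (fun p => a p.1 * b p.2)
      = (u ⬝ᵥ a) * (v ⬝ᵥ b) := by
  simp only [dotProduct, Fintype.sum_prod_type]
  rw [Finset.sum_mul_sum]
  exact Finset.sum_congr rfl fun i _ => Finset.sum_congr rfl fun j _ => by ring

private lemma sylvester_symm {n m : ℕ} {A : Matrix (Fin n) (Fin n) ℝ}
    {B : Matrix (Fin m) (Fin m) ℝ} (hA : A.IsSymm) (hB : B.IsSymm) :
    (A ⊗ₖ (1 : Matrix (Fin m) (Fin m) ℝ) + (1 : Matrix (Fin n) (Fin n) ℝ) ⊗ₖ B).IsSymm := by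
  unfold Matrix.IsSymm
  ext p q
  simp only [Matrix.transpose_apply, Matrix.add_apply, Matrix.kroneckerMap_apply]
  rw [hA.apply, hB.apply, Matrix.one_apply, Matrix.one_apply, Matrix.one_apply, Matrix.one_apply]
  by_cases h1 : p.1 = q.1 <;> by_cases h2 : p.2 = q.2 <;> simp [h1, h2, eq_comm]



/-- For the Sylvester-form operators `M₀ = B₁⊗I + I⊗B₂` (negative definite) and
`M₁ = A₁⊗I + I⊗A₂`, at unit vectors `u, v` the Rayleigh quotient satisfies
`𝔯(u⊗v) = −(uᵀA₁u + vᵀA₂v)/(uᵀB₁u + vᵀB₂v)` and its gradient lies in the tangent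
space `{x⊗v + u⊗y}` of the rank-one manifold. -/
theorem stmt_18 {n m : ℕ}
    (A₁ B₁ : Matrix (Fin n) (Fin n) ℝ) (A₂ B₂ : Matrix (Fin m) (Fin m) ℝ)
    (hA₁ : A₁.IsSymm) (hB₁ : B₁.IsSymm) (hA₂ : A₂.IsSymm) (hB₂ : B₂.IsSymm)
    (M₀ M₁ : Matrix (Fin n × Fin m) (Fin n × Fin m) ℝ)
    (hM₀ : M₀ = B₁ ⊗ₖ (1 : Matrix (Fin m) (Fin m) ℝ) + (1 : Matrix (Fin n) (Fin n) ℝ) ⊗ₖ B₂)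
    (hM₁ : M₁ = A₁ ⊗ₖ (1 : Matrix (Fin m) (Fin m) ℝ) + (1 : Matrix (Fin n) (Fin n) ℝ) ⊗ₖ A₂)
    (hM₀neg : (-M₀).PosDef)
    (R : EuclideanSpace ℝ (Fin n × Fin m) → ℝ)
    (hR : ∀ X : EuclideanSpace ℝ (Fin n × Fin m),
      R X = ((fun p => X p) ⬝ᵥ M₁.mulVec (fun p => X p)) /
        -((fun p => X p) ⬝ᵥ M₀.mulVec (fun p => X p)))
    (u : Fin n → ℝ) (v : Fin m → ℝ)
    (hu : u ⬝ᵥ u = 1) (hv : v ⬝ᵥ v = 1)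
    (w : EuclideanSpace ℝ (Fin n × Fin m)) (hw : ∀ p, w p = u p.1 * v p.2) :
    R w = -((u ⬝ᵥ A₁.mulVec u + v ⬝ᵥ A₂.mulVec v) /
        (u ⬝ᵥ B₁.mulVec u + v ⬝ᵥ B₂.mulVec v)) ∧
      ∃ (x : Fin n → ℝ) (y : Fin m → ℝ),
        ∀ p : Fin n × Fin m, gradient R w p = x p.1 * v p.2 + u p.1 * y p.2 := by
  have hw' : (fun p => w p) = fun p : Fin n × Fin m => u p.1 * v p.2 := funext hw
  -- structure of M.mulVec w
  have hmv : ∀ (A : Matrix (Fin n) (Fin n) ℝ) (B : Matrix (Fin m) (Fin m) ℝ),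
      (A ⊗ₖ (1 : Matrix (Fin m) (Fin m) ℝ)
        + (1 : Matrix (Fin n) (Fin n) ℝ) ⊗ₖ B).mulVec (fun p => w p)
        = fun p => A.mulVec u p.1 * v p.2 + u p.1 * B.mulVec v p.2 := by
    intro A B
    rw [hw', Matrix.add_mulVec, kron_mulVec, kron_mulVec]
    funext p
    simp [Matrix.one_mulVec]
  have hquad : ∀ (A : Matrix (Fin n) (Fin n) ℝ) (B : Matrix (Fin m) (Fin m) ℝ),
      (fun p => w p) ⬝ᵥ (A ⊗ₖ (1 : Matrix (Fin m) (Fin m) ℝ)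
        + (1 : Matrix (Fin n) (Fin n) ℝ) ⊗ₖ B).mulVec (fun p => w p)
        = u ⬝ᵥ A.mulVec u + v ⬝ᵥ B.mulVec v := by
    intro A B
    rw [hmv A B]
    have : (fun p : Fin n × Fin m => w p) ⬝ᵥ
        (fun p => A.mulVec u p.1 * v p.2 + u p.1 * B.mulVec v p.2)
        = (fun p : Fin n × Fin m => w p) ⬝ᵥ (fun p => A.mulVec u p.1 * v p.2)
          + (fun p : Fin n × Fin m => w p) ⬝ᵥ (fun p => u p.1 * B.mulVec v p.2) := by
      rw [← dotProduct_add]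
      rfl
    rw [this, hw', dot_prod_vec, dot_prod_vec, hu, hv, mul_one, one_mul]
  set num := u ⬝ᵥ A₁.mulVec u + v ⬝ᵥ A₂.mulVec v with hnumdef
  set den := u ⬝ᵥ B₁.mulVec u + v ⬝ᵥ B₂.mulVec v with hdendef
  have hq1 : (fun p => w p) ⬝ᵥ M₁.mulVec (fun p => w p) = num := by rw [hM₁]; exact hquad A₁ A₂
  have hq0 : (fun p => w p) ⬝ᵥ M₀.mulVec (fun p => w p) = den := by rw [hM₀]; exact hquad B₁ B₂
  -- w ≠ 0
  have hu0 : ∃ i, u i ≠ 0 := by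
    by_contra h
    push_neg at h
    simp only [dotProduct] at hu
    rw [Finset.sum_eq_zero (fun i _ => by rw [h i, mul_zero])] at hu
    exact zero_ne_one hu
  have hv0 : ∃ j, v j ≠ 0 := by
    by_contra h
    push_neg at h
    simp only [dotProduct] at hv
    rw [Finset.sum_eq_zero (fun j _ => by rw [h j, mul_zero])] at hv
    exact zero_ne_one hv
  obtain ⟨i, hi⟩ := hu0
  obtain ⟨j, hj⟩ := hv0
  have hwne : (fun p : Fin n × Fin m => w p) ≠ 0 := by
    intro h
    have := congrFun h (i, j)
    rw [hw (i, j)] at this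
    exact mul_ne_zero hi hj this
  have hdneg : 0 < -den := by
    have h2 := hM₀neg.dotProduct_mulVec_pos hwne
    rw [star_trivial, Matrix.neg_mulVec, dotProduct_neg, hq0] at h2
    exact h2
  have hdne : den ≠ 0 := by intro h; rw [h, neg_zero] at hdneg; exact lt_irrefl 0 hdneg
  refine ⟨by rw [hR w, hq1, hq0, div_neg], ?_⟩
  -- gradient part
  have hM1s : M₁.IsSymm := by rw [hM₁]; exact sylvester_symm hA₁ hA₂
  have hM0s : M₀.IsSymm := by rw [hM₀]; exact sylvester_symm hB₁ hB₂
  set f : EuclideanSpace ℝ (Fin n × Fin m) → ℝ := fun Y => (fun p => Y p) ⬝ᵥ M₁.mulVec (fun p => Y p) with hf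
  set g : EuclideanSpace ℝ (Fin n × Fin m) → ℝ := fun Y => -((fun p => Y p) ⬝ᵥ M₀.mulVec (fun p => Y p)) with hg
  have hgw : g w = -den := by rw [hg]; simp only; rw [hq0]
  have hfw : f w = num := hq1
  have hgwne : g w ≠ 0 := by rw [hgw]; exact ne_of_gt hdneg
  set Gf : EuclideanSpace ℝ (Fin n × Fin m) := show EuclideanSpace ℝ (Fin n × Fin m) from WithLp.toLp 2 fun p => 2 * M₁.mulVec (fun q => w q) p with hGf
  set G0 : EuclideanSpace ℝ (Fin n × Fin m) := show EuclideanSpace ℝ (Fin n × Fin m) from WithLp.toLp 2 fun p => 2 * M₀.mulVec (fun q => w q) p with hG0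
  have Hf : HasFDerivAt f (InnerProductSpace.toDual ℝ (EuclideanSpace ℝ (Fin n × Fin m)) Gf) w :=
    (quad_hasGradientAt M₁ hM1s w).hasFDerivAt
  have Hg : HasFDerivAt g (-(InnerProductSpace.toDual ℝ (EuclideanSpace ℝ (Fin n × Fin m)) G0)) w :=
    ((quad_hasGradientAt M₀ hM0s w).hasFDerivAt).neg
  have Hinv : HasFDerivAt (fun Y => (g Y)⁻¹)
      ((ContinuousLinearMap.smulRight (1 : ℝ →L[ℝ] ℝ) (-(g w ^ 2)⁻¹)).comp
        (-(InnerProductSpace.toDual ℝ (EuclideanSpace ℝ (Fin n × Fin m)) G0))) w :=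
    (hasFDerivAt_inv hgwne).comp w Hg
  have Hmul := Hf.mul Hinv
  set r₁ := (g w)⁻¹ with hr₁
  set r₀ := f w * (g w ^ 2)⁻¹ with hr₀
  set G : EuclideanSpace ℝ (Fin n × Fin m) := r₁ • Gf + r₀ • G0 with hGdef
  have hDG : InnerProductSpace.toDual ℝ (EuclideanSpace ℝ (Fin n × Fin m)) G
      = f w • ((ContinuousLinearMap.smulRight (1 : ℝ →L[ℝ] ℝ) (-(g w ^ 2)⁻¹)).comp
          (-(InnerProductSpace.toDual ℝ (EuclideanSpace ℝ (Fin n × Fin m)) G0)))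
        + (g w)⁻¹ • InnerProductSpace.toDual ℝ (EuclideanSpace ℝ (Fin n × Fin m)) Gf := by
    ext h
    simp only [InnerProductSpace.toDual_apply_apply, ContinuousLinearMap.add_apply,
      ContinuousLinearMap.coe_smul', Pi.smul_apply, ContinuousLinearMap.comp_apply,
      ContinuousLinearMap.neg_apply, ContinuousLinearMap.smulRight_apply,
      ContinuousLinearMap.one_apply, smul_eq_mul, hGdef, inner_add_left,
      real_inner_smul_left, hr₀, hr₁]
    ring
  have HR : HasGradientAt R G w := by
    rw [hasGradientAt_iff_hasFDerivAt, hDG]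
    have hfun : R = fun Y => f Y * (g Y)⁻¹ := by
      funext Y
      rw [hR Y, div_eq_mul_inv]
    rw [hfun]
    exact Hmul
  have hgrad : gradient R w = G := HR.gradient
  refine ⟨fun i => 2 * r₁ * A₁.mulVec u i + 2 * r₀ * B₁.mulVec u i,
    fun j => 2 * r₁ * A₂.mulVec v j + 2 * r₀ * B₂.mulVec v j, fun p => ?_⟩
  rw [hgrad]
  have hGp : G p = r₁ * (2 * M₁.mulVec (fun q => w q) p) + r₀ * (2 * M₀.mulVec (fun q => w q) p) := by
    rw [hGdef]
    simp [PiLp.add_apply, PiLp.smul_apply, smul_eq_mul, hGf, hG0]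
  rw [hGp]
  have h1 : M₁.mulVec (fun q => w q) p = A₁.mulVec u p.1 * v p.2 + u p.1 * A₂.mulVec v p.2 := by
    rw [hM₁, hmv A₁ A₂]
  have h0 : M₀.mulVec (fun q => w q) p = B₁.mulVec u p.1 * v p.2 + u p.1 * B₂.mulVec v p.2 := by
    rw [hM₀, hmv B₁ B₂]
  rw [h1, h0]
  ring
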